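/- Let a₁/q₁ < a₂/q₂ be consecutive elements of the Farey sequence F_Q of order Q, with 0 < a₁ < q₁ and 0 < a₂ < q₂. If q₁ < q₂, then h(a₂/q₂) > Q, where h(a/q) = q + a + ā and ā is the multiplicative inverse of a mod q in [1, q). -/

import Mathlib

/-- `a₁/q₁ < a₂/q₂` are consecutive elements of the Farey sequence of order `Q`. -/
def FareyConsec (Q a₁ q₁ a₂ q₂ : ℤ) : Prop :=
  0 < q₁ ∧ q₁ ≤ Q ∧ 0 < q₂ ∧ q₂ ≤ Q ∧ 0 ≤ a₁ ∧ a₁ ≤ q₁ ∧ 0 ≤ a₂ ∧ a₂ ≤ q₂ ∧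
  Int.gcd a₁ q₁ = 1 ∧ Int.gcd a₂ q₂ = 1 ∧ (a₁ : ℚ) / q₁ < (a₂ : ℚ) / q₂ ∧
  ∀ c d : ℤ, 0 < d → d ≤ Q → ¬((a₁ : ℚ) / q₁ < (c : ℚ) / d ∧ (c : ℚ) / d < (a₂ : ℚ) / q₂)

theorem stmt_5 (Q a₁ q₁ a₂ q₂ ab₂ : ℤ) (hQ : 1 ≤ Q)
    (hcons : FareyConsec Q a₁ q₁ a₂ q₂)
    (ha₁ : 0 < a₁) (ha₁q : a₁ < q₁) (ha₂ : 0 < a₂) (ha₂q : a₂ < q₂)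
    (hq : q₁ < q₂)
    (hi1 : 1 ≤ ab₂) (hi2 : ab₂ < q₂) (hinv : a₂ * ab₂ ≡ 1 [ZMOD q₂]) :
    Q < q₂ + a₂ + ab₂ := by
  obtain ⟨hq₁, hq₁Q, hq₂, hq₂Q, -, -, -, -, hg₁, hg₂, hlt, hforb⟩ := hcons
  have hq₁' : (0:ℚ) < (q₁:ℚ) := by exact_mod_cast hq₁
  have hq₂' : (0:ℚ) < (q₂:ℚ) := by exact_mod_cast hq₂
  have hcross : a₁ * q₂ < a₂ * q₁ := by
    have := (div_lt_div_iff₀ hq₁' hq₂').1 hlt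
    exact_mod_cast this
  -- mediant argument : Q < q₁ + q₂
  have hQlt : Q < q₁ + q₂ := by
    by_contra h
    push_neg at h
    refine hforb (a₁ + a₂) (q₁ + q₂) (by linarith) h ⟨?_, ?_⟩
    · rw [div_lt_div_iff₀ hq₁' (by positivity)]
      exact_mod_cast (by nlinarith : a₁ * (q₁ + q₂) < (a₁ + a₂) * q₁)
    · rw [div_lt_div_iff₀ (by positivity) hq₂']
      exact_mod_cast (by nlinarith : (a₁ + a₂) * q₂ < a₂ * (q₁ + q₂))
  -- construct the left neighbor a/q with a₂*q - a*q₂ = 1 and Q - q₂ < q ≤ Q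
  set r : ℤ := (Q - ab₂) % q₂ with hr
  have hr0 : 0 ≤ r := Int.emod_nonneg _ (by omega)
  have hrlt : r < q₂ := Int.emod_lt_of_pos _ hq₂
  set q : ℤ := Q - r with hqdef
  have hq0 : 0 < q := by omega
  have hqQ : q ≤ Q := by omega
  have hqab : q₂ ∣ q - ab₂ := by
    have := Int.mul_ediv_add_emod (Q - ab₂) q₂
    exact ⟨(Q - ab₂) / q₂, by omega⟩
  have hdvd1 : q₂ ∣ a₂ * ab₂ - 1 := hinv.symm.dvd
  have hdvd : q₂ ∣ a₂ * q - 1 := by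
    obtain ⟨e, he⟩ := hqab
    obtain ⟨f, hf⟩ := hdvd1
    exact ⟨a₂ * e + f, by linear_combination a₂ * he + hf⟩
  set a : ℤ := (a₂ * q - 1) / q₂ with hadef
  have hdet : a₂ * q - a * q₂ = 1 := by
    have h := Int.ediv_mul_cancel hdvd
    rw [← hadef] at h
    linarith
  have hq' : (0:ℚ) < (q:ℚ) := by exact_mod_cast hq0
  have haq_lt : (a:ℚ) / q < (a₂:ℚ) / q₂ := by
    rw [div_lt_div_iff₀ hq' hq₂']
    exact_mod_cast (by linarith : a * q₂ < a₂ * q)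
  have hle : (a:ℚ) / q ≤ (a₁:ℚ) / q₁ := by
    by_contra h
    push_neg at h
    exact hforb a q hq0 hqQ ⟨h, haq_lt⟩
  -- a/q = a₁/q₁, hence a₂ q₁ - a₁ q₂ = 1
  have hkey : a₂ * q₁ - a₁ * q₂ = 1 := by
    rcases lt_or_eq_of_le hle with h | h
    · -- a/q < a₁/q₁ : contradiction via q₁ ≥ q + q₂ > Q
      exfalso
      have h1 : a * q₁ < a₁ * q := by
        have := (div_lt_div_iff₀ hq' hq₁').1 h
        exact_mod_cast this
      have hid : q * (a₂ * q₁ - a₁ * q₂) + q₂ * (a₁ * q - a * q₁) = q₁ := by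
        linear_combination q₁ * hdet
      have h2 : q * 1 ≤ q * (a₂ * q₁ - a₁ * q₂) :=
        mul_le_mul_of_nonneg_left (by linarith) (le_of_lt hq0)
      have h3 : q₂ * 1 ≤ q₂ * (a₁ * q - a * q₁) :=
        mul_le_mul_of_nonneg_left (by linarith) (le_of_lt hq₂)
      linarith
    · -- a/q = a₁/q₁
      have hcm : a * q₁ = a₁ * q := by
        have := (div_eq_div_iff hq'.ne' hq₁'.ne').1 h
        exact_mod_cast this
      have hc₁ : IsCoprime a₁ q₁ := Int.isCoprime_iff_gcd_eq_one.2 hg₁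
      have hca : IsCoprime a q := ⟨-q₂, a₂, by linarith⟩
      have hd1 : q₁ ∣ q := hc₁.symm.dvd_of_dvd_mul_left ⟨a, by linarith⟩
      have hd2 : q ∣ q₁ := hca.symm.dvd_of_dvd_mul_left ⟨a₁, by linarith⟩
      have heq : q = q₁ := Int.dvd_antisymm (le_of_lt hq0) (le_of_lt hq₁) hd2 hd1
      have haeq : a = a₁ := by
        have h' : a * q₁ = a₁ * q₁ := by rw [hcm, heq]
        exact mul_right_cancel₀ (by omega) h'
      rw [← heq, ← haeq]; exact hdet
  -- now q₂ ∣ q₁ - ab₂ and |q₁ - ab₂| < q₂, so q₁ = ab₂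
  have hdvd2 : q₂ ∣ a₂ * (q₁ - ab₂) := by
    obtain ⟨f, hf⟩ := hdvd1
    exact ⟨a₁ - f, by linear_combination hkey - hf⟩
  have hc₂ : IsCoprime q₂ a₂ := (Int.isCoprime_iff_gcd_eq_one.2 hg₂).symm
  have hfin : q₂ ∣ q₁ - ab₂ := hc₂.dvd_of_dvd_mul_left hdvd2
  have : q₁ - ab₂ = 0 := Int.eq_zero_of_abs_lt_dvd hfin (abs_lt.2 ⟨by omega, by omega⟩)
  omega
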